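/- Let K be a number field, 𝔮 a prime of K not dividing 2, and λ ∈ K with λ ≠ 0, 1. If v_𝔮(2⁸(λ² − λ + 1)³ / (λ²(λ−1)²)) ≥ 0 (the j-invariant of Y² = X(X+1)(X+λ) is 𝔮-integral), then v_𝔮(16 λ²(λ−1)²) = 0, i.e. the discriminant of the model Y² = X(X+1)(X+λ) is a 𝔮-adic unit. -/

import Mathlib

open NumberField IsDedekindDomain

/-- If the `j`-invariant `2⁸(λ²−λ+1)³/(λ²(λ−1)²)` of `Y² = X(X+1)(X+λ)` is integral at a
prime `𝔮 ∤ 2` of a number field `K`, then the discriminant `16λ²(λ−1)²` of this model is a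
`𝔮`-adic unit.  (The multiplicative valuation `≤ 1` corresponds to additive valuation `≥ 0`.) -/
theorem discriminant_unit_of_j_integral {K : Type*} [Field K] [NumberField K]
    (q : HeightOneSpectrum (𝓞 K)) (hq2 : (2 : 𝓞 K) ∉ q.asIdeal)
    (lam : K) (h0 : lam ≠ 0) (h1 : lam ≠ 1)
    (hj : q.valuation K (2 ^ 8 * (lam ^ 2 - lam + 1) ^ 3 / (lam ^ 2 * (lam - 1) ^ 2)) ≤ 1) :
    q.valuation K (16 * lam ^ 2 * (lam - 1) ^ 2) = 1 := by
  set v := (q.valuation K : Valuation K _) with hv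
  -- v 2 = 1
  have h2K : ((2 : 𝓞 K) : K) = (2 : K) := by norm_cast
  have hv2 : v (2 : K) = 1 := by
    refine le_antisymm ?_ ?_
    · have := q.valuation_le_one (K := K) (2 : 𝓞 K)
      rwa [Algebra.cast, map_ofNat] at this
    · by_contra h
      push_neg at h
      have : v ((algebraMap (𝓞 K) K) (2 : 𝓞 K)) < 1 := by
        rwa [show (algebraMap (𝓞 K) K) (2 : 𝓞 K) = (2 : K) from h2K]
      rw [q.valuation_lt_one_iff_dvd (K := K), Ideal.dvd_span_singleton] at this
      exact hq2 this
  have ha0 : v lam ≠ 0 := by simpa using h0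
  have hb0 : v (lam - 1) ≠ 0 := by
    simp only [hv, ne_eq, map_eq_zero, sub_eq_zero]
    exact h1
  set a := v lam with ha
  set b := v (lam - 1) with hb
  -- simplify hj
  have hab0 : a ^ 2 * b ^ 2 ≠ 0 := by
    simp [pow_eq_zero_iff, ha0, hb0]
  have hjv : (v (lam ^ 2 - lam + 1)) ^ 3 ≤ a ^ 2 * b ^ 2 := by
    rw [map_div₀, map_mul, map_pow, hv2, one_pow, one_mul, map_mul, map_pow, map_pow, map_pow,
      div_le_one₀ (zero_lt_iff.mpr hab0)] at hj
    exact hj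
  have hkey : lam ^ 2 - lam + 1 = lam * (lam - 1) + 1 := by ring
  -- case a > 1
  rcases lt_trichotomy a 1 with hlt | heq | hgt
  · -- a < 1 : then b = 1
    have hb1 : b = 1 := by
      have : v (lam - 1) = max (v lam) (v (-1 : K)) := by
        rw [show lam - 1 = lam + (-1 : K) by ring]
        apply Valuation.map_add_of_distinct_val
        simp only [Valuation.map_neg, map_one]
        exact ne_of_lt hlt
      rw [← hb] at this
      simp only [Valuation.map_neg, map_one] at this
      rw [this, max_eq_right hlt.le]
    -- v (lam*(lam-1)) = a * 1 < 1, so v of +1 is 1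
    have hc : v (lam ^ 2 - lam + 1) = 1 := by
      rw [hkey]
      have hlt' : v (lam * (lam - 1)) < 1 := by
        rw [map_mul, ← ha, ← hb, hb1, mul_one]
        exact hlt
      rw [Valuation.map_add_of_distinct_val _ (by rw [map_one]; exact ne_of_lt hlt'),
        map_one, max_eq_right hlt'.le]
    rw [hc, one_pow, hb1] at hjv
    exfalso
    have : a ^ 2 * 1 ^ 2 < 1 := by
      rw [one_pow, mul_one]
      calc a ^ 2 = a * a := sq a
      _ < 1 := by
        have := mul_lt_mul'' hlt hlt zero_le' zero_le'
        simpa using this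
    exact absurd hjv (not_le.mpr this)
  · -- a = 1 : b ≤ 1
    have hble : b ≤ 1 := by
      have : v (lam - 1) ≤ max (v lam) (v (-1 : K)) := by
        rw [show lam - 1 = lam + (-1 : K) by ring]
        exact Valuation.map_add _ _ _
      simpa [← ha, ← hb, heq] using this
    rcases lt_or_eq_of_le hble with hblt | hbeq
    · -- b < 1: v(lam(lam-1)) = b < 1 so v(...+1)=1, hjv : 1 ≤ b^2 < 1
      have hc : v (lam ^ 2 - lam + 1) = 1 := by
        rw [hkey]
        have hlt' : v (lam * (lam - 1)) < 1 := by
          rw [map_mul, ← ha, ← hb, heq, one_mul]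
          exact hblt
        rw [Valuation.map_add_of_distinct_val _ (by rw [map_one]; exact ne_of_lt hlt'),
          map_one, max_eq_right hlt'.le]
      rw [hc, one_pow, heq] at hjv
      exfalso
      have : b ^ 2 < 1 := by
        calc b ^ 2 = b * b := sq b
        _ < 1 := by simpa using mul_lt_mul'' hblt hblt zero_le' zero_le'
      simp only [one_pow, one_mul] at hjv
      exact absurd hjv (not_le.mpr this)
    · -- a = 1, b = 1 : conclude
      have h16 : v (16 : K) = 1 := by
        have : (16 : K) = 2 ^ 4 := by norm_num
        rw [this, map_pow, hv2, one_pow]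
      rw [map_mul, map_mul, map_pow, map_pow, h16, ← ha, ← hb, heq, hbeq]
      simp
  · -- a > 1 : b = a, c = a^2, hjv : a^6 ≤ a^4, contradiction
    exfalso
    have hb1 : b = a := by
      have : v (lam - 1) = max (v lam) (v (-1 : K)) := by
        rw [show lam - 1 = lam + (-1 : K) by ring]
        apply Valuation.map_add_of_distinct_val
        simp only [Valuation.map_neg, map_one]
        exact ne_of_gt hgt
      rw [← hb] at this
      simp only [Valuation.map_neg, map_one] at this
      rw [this, ← ha, max_eq_left hgt.le]
    have hc : v (lam ^ 2 - lam + 1) = a * a := by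
      rw [hkey]
      have hml : v (lam * (lam - 1)) = a * a := by
        rw [map_mul, ← ha, ← hb, hb1]
      have : v (1 : K) < v (lam * (lam - 1)) := by
        rw [map_one, hml]
        calc (1 : (WithZero (Multiplicative ℤ))) = 1 * 1 := (one_mul 1).symm
        _ < a * a := mul_lt_mul'' hgt hgt zero_le' zero_le'
      rw [Valuation.map_add_of_distinct_val _ (ne_of_gt this), max_eq_left this.le, hml]
    rw [hc, hb1] at hjv
    -- hjv : (a*a)^3 ≤ a^2 * a^2 , i.e. a^6 ≤ a^4
    have h4 : a ^ 2 * a ^ 2 = a ^ 4 := by rw [← pow_add]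
    have h6 : (a * a) ^ 3 = a ^ 4 * a ^ 2 := by rw [← sq, ← pow_mul, ← pow_add]
    rw [h4, h6] at hjv
    have ha4 : (a ^ 4 : (WithZero (Multiplicative ℤ))) ≠ 0 := pow_ne_zero _ ha0
    have : a ^ 2 ≤ 1 := (mul_le_iff_le_one_right (zero_lt_iff.mpr ha4)).mp hjv
    have hgt2 : (1 : (WithZero (Multiplicative ℤ))) < a ^ 2 := by
      calc (1 : (WithZero (Multiplicative ℤ))) = 1 * 1 := (one_mul 1).symm
      _ < a * a := mul_lt_mul'' hgt hgt zero_le' zero_le'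
      _ = a ^ 2 := (sq a).symm
    exact absurd this (not_le.mpr hgt2)
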